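/- arXiv:cond-mat/9805241 — 8 statements merged into one kernel-verified Lean document; each statement's English description precedes it below -/
import Mathlib

section
/- Under the duality hypothesis on T_0,…,T_5, for every v ∈ ℂ: Λ_{(4,4)/(2)}(v) = Λ_{(3,1)}(v + (2/5)i). -/
noncomputable section

/-- `T'_m`: equal to `T_m` for `0 ≤ m ≤ 5`, and the zero function otherwise. -/
def Tp (T : ℤ → ℂ → ℂ) (m : ℤ) : ℂ → ℂ :=
  if 0 ≤ m ∧ m ≤ 5 then T m else 0

/-- `Λ_{μ/λ}(v) := det_{1 ≤ j,k ≤ d} T'_{μ_j - λ_k - j + k}(v + i(d - μ_1 + μ_j + λ_k - j - k + 1))`,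
with rows and columns indexed by `j k : Fin d` (0-based, so row `j+1`, column `k+1`). -/
def Lam {d : ℕ} [NeZero d] (T : ℤ → ℂ → ℂ) (μ lam : Fin d → ℤ) (v : ℂ) : ℂ :=
  Matrix.det (Matrix.of fun j k : Fin d =>
    Tp T (μ j - lam k - ((j : ℕ) : ℤ) + ((k : ℕ) : ℤ))
      (v + Complex.I *
        (((d : ℤ) - μ 0 + μ j + lam k - ((j : ℕ) : ℤ) - ((k : ℕ) : ℤ) - 1 : ℤ) : ℂ)))

/-- The duality relation `T_m(v) = T_{5-m}(v + (8/5)i)` for `m = 0,…,5`. -/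
def DualityHyp (T : ℤ → ℂ → ℂ) : Prop :=
  ∀ m : ℤ, 0 ≤ m → m ≤ 5 → ∀ v : ℂ, T m v = T (5 - m) (v + (8 / 5 : ℂ) * Complex.I)

/-- Duality relation (1): `Λ_{(4,4)/(2)}(v) = Λ_{(3,1)}(v + (2/5)i)`. -/
theorem lam_duality_44_2 (T : ℤ → ℂ → ℂ) (hdual : DualityHyp T) (v : ℂ) :
    Lam T ![4, 4] ![2, 0] v = Lam T ![3, 1] ![0, 0] (v + (2 / 5 : ℂ) * Complex.I) := by
  simp only [Lam, Matrix.det_fin_two, Matrix.of_apply, Matrix.cons_val_zero,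
    Matrix.cons_val_one, Matrix.head_cons, Fin.val_zero, Fin.val_one, Fin.isValue]
  norm_num [Tp]
  have e1 : T 3 (v + 2/5*Complex.I + Complex.I) = T 2 (v + Complex.I*3) := by
    rw [hdual 3 (by norm_num) (by norm_num)]; norm_num; congr 1; ring
  have e2 : T 1 (v + 2/5*Complex.I + -(Complex.I*3)) = T 4 (v + -Complex.I) := by
    rw [hdual 1 (by norm_num) (by norm_num)]; norm_num; congr 1; ring
  have e3 : T 4 (v + 2/5*Complex.I) = T 1 (v + Complex.I*2) := by
    rw [hdual 4 (by norm_num) (by norm_num)]; norm_num; congr 1; ring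
  have e4 : T 0 (v + 2/5*Complex.I + -(Complex.I*2)) = T 5 v := by
    rw [hdual 0 (by norm_num) (by norm_num)]; norm_num; congr 1; ring
  rw [e1, e2, e3, e4]; ring

end
end

section
/- Under the duality hypothesis on T_0,…,T_5, for every v ∈ ℂ: Λ_{(4,2)/(1)}(v) = Λ_{(4,3)/(2)}(v + (3/5)i). -/
noncomputable section

/-- Duality relation (2): `Λ_{(4,2)/(1)}(v) = Λ_{(4,3)/(2)}(v + (3/5)i)`. -/
theorem lam_duality_42_1 (T : ℤ → ℂ → ℂ) (hdual : DualityHyp T) (v : ℂ) :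
    Lam T ![4, 2] ![1, 0] v = Lam T ![4, 3] ![2, 0] (v + (3 / 5 : ℂ) * Complex.I) := by
  simp only [Lam, Matrix.det_fin_two, Matrix.of_apply, Matrix.cons_val_zero,
    Matrix.cons_val_one, Matrix.head_cons, Fin.val_zero, Fin.val_one]
  simp only [Tp]
  norm_num
  rw [hdual 3 (by norm_num) (by norm_num) (v + Complex.I * 2),
      hdual 2 (by norm_num) (by norm_num) (v + -(Complex.I * 3)),
      hdual 5 (by norm_num) (by norm_num) v,
      hdual 0 (by norm_num) (by norm_num) (v + -Complex.I)]
  norm_num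
  ring_nf

end
end

section
/- Under the duality hypothesis on T_0,…,T_5, for every v ∈ ℂ: Λ_{(4,4)/(3)}(v) = Λ_{(4,1)}(v + (7/5)i). -/
noncomputable section

/-- Duality relation (3): `Λ_{(4,4)/(3)}(v) = Λ_{(4,1)}(v + (7/5)i)`. -/
theorem lam_duality_44_3 (T : ℤ → ℂ → ℂ) (hdual : DualityHyp T) (v : ℂ) :
    Lam T ![4, 4] ![3, 0] v = Lam T ![4, 1] ![0, 0] (v + (7 / 5 : ℂ) * Complex.I) := by
  have h1 : T 4 (v + (12/5 : ℂ) * Complex.I) = T 1 (v + 4 * Complex.I) := by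
    have := hdual 4 (by norm_num) (by norm_num) (v + (12/5 : ℂ) * Complex.I)
    rw [this]; norm_num; ring_nf
  have h2 : T 1 (v - (13/5 : ℂ) * Complex.I) = T 4 (v - Complex.I) := by
    have := hdual 1 (by norm_num) (by norm_num) (v - (13/5 : ℂ) * Complex.I)
    rw [this]; norm_num; ring_nf
  have h3 : T 0 (v - (8/5 : ℂ) * Complex.I) = T 5 v := by
    have := hdual 0 (by norm_num) (by norm_num) (v - (8/5 : ℂ) * Complex.I)
    rw [this]; norm_num
  have h4 : T 5 (v + (7/5 : ℂ) * Complex.I) = T 0 (v + 3 * Complex.I) := by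
    have := hdual 5 (by norm_num) (by norm_num) (v + (7/5 : ℂ) * Complex.I)
    rw [this]; norm_num; ring_nf
  simp only [Lam, Matrix.det_fin_two, Matrix.of_apply, Tp]
  norm_num
  ring_nf
  ring_nf at h1 h2 h3 h4
  rw [h1, h2, h3, h4]
  ring

end
end

section
/- Under the duality hypothesis on T_0,…,T_5, for every v ∈ ℂ: Λ_{(7,4,4)/(3,3)}(v) = Λ_{(4,4,1)/(3)}(v + (8/5)i). -/
noncomputable section

/-- Duality relation (4): `Λ_{(7,4,4)/(3,3)}(v) = Λ_{(4,4,1)/(3)}(v + (8/5)i)`. -/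
theorem lam_duality_744_33 (T : ℤ → ℂ → ℂ) (hdual : DualityHyp T) (v : ℂ) :
    Lam T ![7, 4, 4] ![3, 3, 0] v = Lam T ![4, 4, 1] ![3, 0, 0] (v + (8 / 5 : ℂ) * Complex.I) := by
  have h := fun m h0 h5 u => hdual m h0 h5 u
  simp only [Lam, Matrix.det_fin_three, Matrix.of_apply, Matrix.cons_val', Matrix.cons_val_zero,
    Matrix.cons_val_one, Matrix.head_cons, Matrix.cons_val_two, Matrix.tail_cons,
    Matrix.empty_val', Matrix.cons_val_fin_one, Fin.isValue, Fin.val_zero, Fin.val_one,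
    Fin.val_two]
  norm_num
  simp only [Tp]
  norm_num
  rw [h 4 (by norm_num) (by norm_num), h 5 (by norm_num) (by norm_num),
    h 0 (by norm_num) (by norm_num), h 1 (by norm_num) (by norm_num)]
  norm_num
  ring_nf
  rw [h 4 (by norm_num) (by norm_num) (v - Complex.I * 5),
    h 5 (by norm_num) (by norm_num) (v + Complex.I * 4),
    h 0 (by norm_num) (by norm_num) (v + Complex.I)]
  norm_num
  ring_nf

end
end

section
/- Under the duality hypothesis on T_0,…,T_5, for every v ∈ ℂ: Λ_{(6,4,3)/(3,2)}(v) = Λ_{(5,4,2)/(3,1)}(v + (8/5)i). -/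
noncomputable section

/-- Duality relation (5): `Λ_{(6,4,3)/(3,2)}(v) = Λ_{(5,4,2)/(3,1)}(v + (8/5)i)`. -/
theorem lam_duality_643_32 (T : ℤ → ℂ → ℂ) (hdual : DualityHyp T) (v : ℂ) :
    Lam T ![6, 4, 3] ![3, 2, 0] v = Lam T ![5, 4, 2] ![3, 1, 0] (v + (8 / 5 : ℂ) * Complex.I) := by
  have h : ∀ m : ℤ, ∀ w : ℂ,
      Tp T m w = Tp T (5 - m) (w + (8 / 5 : ℂ) * Complex.I) := by
    intro m w
    by_cases hm : 0 ≤ m ∧ m ≤ 5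
    · rw [Tp, Tp, if_pos hm, if_pos ⟨by omega, by omega⟩]
      exact hdual m hm.1 hm.2 w
    · rw [Tp, Tp, if_neg hm, if_neg (by omega)]
      rfl
  rw [Lam, Lam, ← Matrix.det_transpose]
  congr 1
  ext j k
  fin_cases j <;> fin_cases k <;>
    simp only [Matrix.transpose_apply, Matrix.of_apply, Matrix.cons_val_zero,
      Matrix.cons_val_one, Matrix.head_cons, Matrix.cons_val_two, Matrix.tail_cons,
      Fin.isValue, Fin.val_zero, Fin.val_one, Fin.val_two] <;>
    norm_num <;>
    (rw [h]; norm_num; try ring_nf)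

end
end

section
/- Under the duality hypothesis on T_0,…,T_5, for every v ∈ ℂ: Λ_{(7,7,4,4)/(6,3,3)}(v) = Λ_{(7,4,4,1)/(3,3)}(v + (7/5)i). -/
noncomputable section

/-- Duality relation (6): `Λ_{(7,7,4,4)/(6,3,3)}(v) = Λ_{(7,4,4,1)/(3,3)}(v + (7/5)i)`. -/
theorem lam_duality_7744_633 (T : ℤ → ℂ → ℂ) (hdual : DualityHyp T) (v : ℂ) :
    Lam T ![7, 7, 4, 4] ![6, 3, 3, 0] v =
      Lam T ![7, 4, 4, 1] ![3, 3, 0, 0] (v + (7 / 5 : ℂ) * Complex.I) := by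
  have hTp : ∀ m : ℤ, ∀ w : ℂ, Tp T m w = Tp T (5 - m) (w + (8 / 5 : ℂ) * Complex.I) := by
    intro m w
    unfold Tp
    by_cases h : 0 ≤ m ∧ m ≤ 5
    · rw [if_pos h, if_pos ⟨by omega, by omega⟩]
      exact hdual m h.1 h.2 w
    · rw [if_neg h, if_neg (by omega)]
      rfl
  unfold Lam
  rw [← Matrix.det_transpose]
  congr 1
  ext j k
  simp only [Matrix.transpose_apply, Matrix.of_apply]
  fin_cases j <;> fin_cases k <;>
    · simp only [Fin.isValue, Matrix.cons_val_zero, Matrix.cons_val_one, Matrix.head_cons,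
        Matrix.cons_val_two, Matrix.tail_cons, Matrix.cons_val_three, Fin.val_zero, Fin.val_one,
        Fin.val_two]
      conv_rhs => rw [hTp]
      norm_num
      ring_nf

end
end

section
/- Under the duality hypothesis on T_0,…,T_5, for every v ∈ ℂ: Λ_{(7,7,4,4,1)/(6,3,3)}(v) = Λ_{(10,7,7,4,4)/(6,6,3,3)}(v + (8/5)i). -/
noncomputable section

lemma Tp_dual (T : ℤ → ℂ → ℂ) (hdual : DualityHyp T) (m : ℤ) (w : ℂ) :
    Tp T m w = Tp T (5 - m) (w + (8 / 5 : ℂ) * Complex.I) := by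
  unfold Tp
  by_cases h : 0 ≤ m ∧ m ≤ 5
  · rw [if_pos h, if_pos ⟨by omega, by omega⟩]
    exact hdual m h.1 h.2 w
  · rw [if_neg h, if_neg (by omega)]
    rfl

lemma Tp_dual' (T : ℤ → ℂ → ℂ) (hdual : DualityHyp T) (m m' : ℤ) (w w' : ℂ)
    (hm : m' = 5 - m) (hw : w' = w + (8 / 5 : ℂ) * Complex.I) :
    Tp T m w = Tp T m' w' := by
  subst hm hw; exact Tp_dual T hdual m w

/-- Duality relation (7): `Λ_{(7,7,4,4,1)/(6,3,3)}(v) = Λ_{(10,7,7,4,4)/(6,6,3,3)}(v + (8/5)i)`. -/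
theorem lam_duality_77441_633 (T : ℤ → ℂ → ℂ) (hdual : DualityHyp T) (v : ℂ) :
    Lam T ![7, 7, 4, 4, 1] ![6, 3, 3, 0, 0] v =
      Lam T ![10, 7, 7, 4, 4] ![6, 6, 3, 3, 0] (v + (8 / 5 : ℂ) * Complex.I) := by
  rw [Lam, Lam, ← Matrix.det_transpose]
  congr 1
  ext j k
  simp only [Matrix.transpose_apply, Matrix.of_apply]
  fin_cases j <;> fin_cases k <;>
    · refine Tp_dual' T hdual _ _ _ _ (by norm_num [Matrix.cons_val_zero, Matrix.cons_val_one]) ?_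
      norm_num [Matrix.cons_val_zero, Matrix.cons_val_one]
      try ring

end
end

section
/- Let φ : ℂ → ℂ satisfy φ(v + (16/5)i) = φ(v) for all v ∈ ℂ, and for m ≥ 2 define f_m(v) := ∏_{j=1}^{m−1} φ(v + i((2m−1)/2 − j)) · φ(v − i((2m−1)/2 − j)). Then for every v ∈ ℂ: f_2(v) · f_2(v + i) · f_2(v + 2i) · f_2(v + (8/5)i) · f_3(v + 5i) · f_4(v − 4i) = f_5(v − 7i) · f_5(v + i) · f_2(v − (27/5)i). -/
noncomputable section

/-- `f_m(v) := ∏_{j=1}^{m-1} φ(v + i((2m-1)/2 - j)) · φ(v - i((2m-1)/2 - j))`. -/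
def ff (φ : ℂ → ℂ) (m : ℕ) (v : ℂ) : ℂ :=
  ∏ j ∈ Finset.Icc 1 (m - 1),
    (φ (v + Complex.I * ((2 * (m : ℂ) - 1) / 2 - (j : ℂ))) *
      φ (v - Complex.I * ((2 * (m : ℂ) - 1) / 2 - (j : ℂ))))

/-- The identity among products of `f_m`'s to which the paper reduces the proof of
relation (rel2) of its Lemma 2:
`f_2(v) f_2(v+i) f_2(v+2i) f_2(v+(8/5)i) f_3(v+5i) f_4(v-4i)
  = f_5(v-7i) f_5(v+i) f_2(v-(27/5)i)`. -/
theorem ff_identity (φ : ℂ → ℂ)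
    (hper : ∀ v : ℂ, φ (v + (16 / 5 : ℂ) * Complex.I) = φ v) (v : ℂ) :
    ff φ 2 v * ff φ 2 (v + Complex.I) * ff φ 2 (v + 2 * Complex.I) *
        ff φ 2 (v + (8 / 5 : ℂ) * Complex.I) * ff φ 3 (v + 5 * Complex.I) *
        ff φ 4 (v - 4 * Complex.I) =
      ff φ 5 (v - 7 * Complex.I) * ff φ 5 (v + Complex.I) *
        ff φ 2 (v - (27 / 5 : ℂ) * Complex.I) := by
  have P : ∀ (w : ℂ) (n : ℕ), φ (w + (n : ℂ) * ((16 / 5 : ℂ) * Complex.I)) = φ w := by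
    intro w n
    induction n with
    | zero => norm_num
    | succ k ih =>
      push_cast
      rw [show w + ((k : ℂ) + 1) * ((16 / 5 : ℂ) * Complex.I)
          = (w + (k : ℂ) * ((16 / 5 : ℂ) * Complex.I)) + (16 / 5 : ℂ) * Complex.I by ring,
        hper, ih]
  have key : ∀ (a b : ℂ) (n : ℕ), a = b + (n : ℂ) * ((16 / 5 : ℂ) * Complex.I) →
      φ a = φ b := by
    intro a b n h; rw [h, P]
  have h1 : φ (v + Complex.I * (11 / 2)) = φ (v + Complex.I * (-21 / 2)) :=
    key _ _ 5 (by push_cast; ring)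
  have h2 : φ (v + Complex.I * (13 / 2)) = φ (v + Complex.I * (-19 / 2)) :=
    key _ _ 5 (by push_cast; ring)
  have h3 : φ (v + Complex.I * (11 / 10)) = φ (v + Complex.I * (-17 / 2)) :=
    key _ _ 3 (by push_cast; ring)
  have h4 : φ (v + Complex.I * (21 / 10)) = φ (v + Complex.I * (-15 / 2)) :=
    key _ _ 3 (by push_cast; ring)
  have h5 : φ (v + Complex.I * (1 / 2)) = φ (v + Complex.I * (-59 / 10)) :=
    key _ _ 2 (by push_cast; ring)
  have h6 : φ (v + Complex.I * (3 / 2)) = φ (v + Complex.I * (-49 / 10)) :=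
    key _ _ 2 (by push_cast; ring)
  norm_num [ff, Finset.prod_Icc_succ_top, Finset.Icc_self, Finset.prod_singleton]
  ring_nf
  rw [← h1, ← h2, ← h3, ← h4, ← h5, ← h6]
  ring

end
end
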